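/- With p timelike, w ∈ p^⊥ nonzero, q timelike with ⟨p,q⟩ ≠ 0, and w' := w - (⟨w,q⟩/⟨p,q⟩)p, one has the identity ta(p,q) = ta(w,w') provided p, q, w span a subspace in which w' ≠ 0. Consequently ℓ_p/ℓ_q = √(ta(p,q)) in the coplanar case, i.e. the length-contraction factor equals the Lorentz factor. -/

import Mathlib

noncomputable def mdot {n : ℕ} (p q : Fin (n + 1) → ℝ) : ℝ :=
  (∑ i, p i * q i) - 2 * (p 0 * q 0)

noncomputable def tance {n : ℕ} (p q : Fin (n + 1) → ℝ) : ℝ :=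
  (mdot p q) ^ 2 / (mdot p p * mdot q q)

lemma mdot_comm {n : ℕ} (p q : Fin (n + 1) → ℝ) : mdot p q = mdot q p := by
  simp [mdot, mul_comm]

lemma mdot_smul_left {n : ℕ} (c : ℝ) (p q : Fin (n + 1) → ℝ) :
    mdot (c • p) q = c * mdot p q := by
  simp [mdot, mul_sub, Finset.mul_sum, mul_assoc]
  ring

lemma mdot_add_left {n : ℕ} (p p' q : Fin (n + 1) → ℝ) :
    mdot (p + p') q = mdot p q + mdot p' q := by
  simp [mdot, add_mul, Finset.sum_add_distrib]
  ring

lemma mdot_sub_left {n : ℕ} (p p' q : Fin (n + 1) → ℝ) :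
    mdot (p - p') q = mdot p q - mdot p' q := by
  simp [mdot, sub_mul, Finset.sum_sub_distrib]
  ring

lemma mdot_pos_aux {n : ℕ} (p w : Fin (n + 1) → ℝ)
    (hp : mdot p p < 0) (hwp : mdot w p = 0) (hw : w ≠ 0) : 0 < mdot w w := by
  have hsplit : ∀ f g : Fin (n+1) → ℝ,
      mdot f g = (∑ i : Fin n, f i.succ * g i.succ) - f 0 * g 0 := by
    intro f g
    simp [mdot, Fin.sum_univ_succ]
    ring
  rw [hsplit] at hp hwp ⊢
  set P := ∑ i : Fin n, p i.succ * p i.succ with hP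
  set W := ∑ i : Fin n, w i.succ * w i.succ with hW
  have hPnn : 0 ≤ P := Finset.sum_nonneg fun i _ => mul_self_nonneg _
  have hWnn : 0 ≤ W := Finset.sum_nonneg fun i _ => mul_self_nonneg _
  have hp0 : p 0 * p 0 > 0 := by nlinarith
  have hcs : (∑ i : Fin n, w i.succ * p i.succ) ^ 2 ≤ W * P := by
    have := Finset.sum_mul_sq_le_sq_mul_sq Finset.univ (fun i : Fin n => w i.succ)
      (fun i : Fin n => p i.succ)
    simpa [sq, hW, hP, pow_two] using this
  rcases eq_or_lt_of_le hWnn with hW0 | hWpos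
  · exfalso
    have hz : ∀ i : Fin n, w i.succ = 0 := by
      intro i
      have := (Finset.sum_eq_zero_iff_of_nonneg
        (fun i _ => mul_self_nonneg (w i.succ))).mp hW0.symm i (Finset.mem_univ i)
      exact mul_self_eq_zero.mp this
    have hsum0 : (∑ i : Fin n, w i.succ * p i.succ) = 0 := by
      apply Finset.sum_eq_zero; intro i _; rw [hz i]; ring
    have hw0 : w 0 = 0 := by
      have : w 0 * p 0 = 0 := by linarith [hwp, hsum0]
      rcases mul_eq_zero.mp this with h | h
      · exact h
      · exfalso; rw [h] at hp0; simp at hp0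
    apply hw
    funext i
    refine Fin.cases ?_ ?_ i
    · exact hw0
    · exact hz
  · have hs : (∑ i : Fin n, w i.succ * p i.succ) = w 0 * p 0 := by linarith
    rw [hs] at hcs
    have h2 : W * P < W * (p 0 * p 0) := by nlinarith
    have h3 : (w 0 * w 0) * (p 0 * p 0) < W * (p 0 * p 0) := by nlinarith
    have h4 : w 0 * w 0 < W := lt_of_mul_lt_mul_right h3 (le_of_lt hp0)
    linarith

lemma mdot_smul_right {n : ℕ} (c : ℝ) (p q : Fin (n + 1) → ℝ) :
    mdot q (c • p) = c * mdot q p := by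
  rw [mdot_comm, mdot_smul_left, mdot_comm]

lemma mdot_sub_right {n : ℕ} (p p' q : Fin (n + 1) → ℝ) :
    mdot q (p - p') = mdot q p - mdot q p' := by
  rw [mdot_comm, mdot_sub_left, mdot_comm, mdot_comm p' q]

/-- `ta(p,q) = ta(w,w')` in the coplanar case, hence
`ℓ_p/ℓ_q = √(ta(p,q))`, the Lorentz factor. -/
theorem tance_eq_tance_rod {n : ℕ} (p q w : Fin (n + 1) → ℝ)
    (hp : mdot p p < 0) (hq : mdot q q < 0)
    (hw : w ≠ 0) (hwp : mdot w p = 0) (hpq : mdot p q ≠ 0)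
    (hdep : ¬ LinearIndependent ℝ ![p, q, w])
    (hw' : w - (mdot w q / mdot p q) • p ≠ 0) :
    tance p q = tance w (w - (mdot w q / mdot p q) • p) ∧
    Real.sqrt (mdot w w) /
        Real.sqrt (mdot (w - (mdot w q / mdot p q) • p) (w - (mdot w q / mdot p q) • p))
      = Real.sqrt (tance p q) := by
  set w' : Fin (n+1) → ℝ := w - (mdot w q / mdot p q) • p with hw'def
  have hpw : mdot p w = 0 := (mdot_comm p w).trans hwp
  have hww : 0 < mdot w w := mdot_pos_aux p w hp hwp hw
  have hpp : mdot p p ≠ 0 := ne_of_lt hp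
  have hqq : mdot q q ≠ 0 := ne_of_lt hq
  -- ⟨w, w'⟩ = ⟨w, w⟩
  have hww' : mdot w w' = mdot w w := by
    rw [mdot_comm w w', hw'def, mdot_sub_left, mdot_smul_left, hpw, mul_zero, sub_zero]
  -- ⟨w', w'⟩ = ⟨w,w⟩ + (wq/pq)² ⟨p,p⟩
  have hw'w' : mdot w' w' = mdot w w + (mdot w q / mdot p q)^2 * mdot p p := by
    rw [hw'def, mdot_sub_left, mdot_sub_right, mdot_sub_right, mdot_smul_left,
      mdot_smul_right, mdot_smul_right, mdot_smul_left, hwp, hpw]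
    ring
  -- key facts, proved by cases on how the dependence relation looks
  have key : mdot w' w' ≠ 0 ∧ tance p q = mdot w w / mdot w' w' := by
    rw [Fintype.not_linearIndependent_iff] at hdep
    obtain ⟨g, hgsum, i, hgi⟩ := hdep
    rw [Fin.sum_univ_three] at hgsum
    simp only [Matrix.cons_val_zero, Matrix.cons_val_one, Matrix.head_cons,
      Matrix.cons_val_two, Matrix.tail_cons] at hgsum
    by_cases hg2 : g 2 = 0
    · -- q is a multiple of p, hence mdot w q = 0 and w' = w
      rw [hg2, zero_smul, add_zero] at hgsum
      by_cases hg1 : g 1 = 0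
      · exfalso
        rw [hg1, zero_smul, add_zero] at hgsum
        have hg0 : g 0 ≠ 0 := by
          rcases i with ⟨iv, hiv⟩
          interval_cases iv <;> simp_all
        have hp0 : p = 0 := by
          funext j
          have h := congrFun hgsum j
          simp at h
          rcases h with h | h
          · exact absurd h hg0
          · exact h
        rw [hp0] at hp
        simp [mdot] at hp
      · obtain ⟨t, hqcp⟩ : ∃ t : ℝ, q = t • p := by
          refine ⟨-(g 0 / g 1), ?_⟩
          funext j
          have h := congrFun hgsum j
          simp at h ⊢
          field_simp
          linear_combination h
        have hwq : mdot w q = 0 := by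
          rw [hqcp, mdot_smul_right, hwp, mul_zero]
        have hweq : w' = w := by
          rw [hw'def, hwq, zero_div, zero_smul, sub_zero]
        have hpq' : mdot p q = t * mdot p p := by
          rw [hqcp, mdot_smul_right]
        have hqq' : mdot q q = t^2 * mdot p p := by
          rw [hqcp, mdot_smul_left, mdot_smul_right]; ring
        have ht : t ≠ 0 := by
          intro h
          rw [h, zero_mul] at hpq'
          exact hpq hpq'
        refine ⟨by rw [hweq]; exact ne_of_gt hww, ?_⟩
        rw [hweq, div_self (ne_of_gt hww), tance, hpq', hqq']
        field_simp
    · -- w = a • p + b • q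
      obtain ⟨a, b, hweq⟩ : ∃ a b : ℝ, w = a • p + b • q := by
        refine ⟨-(g 0 / g 2), -(g 1 / g 2), ?_⟩
        funext j
        have h := congrFun hgsum j
        simp at h ⊢
        field_simp
        linear_combination h
      have hqp : mdot q p = mdot p q := mdot_comm q p
      have e1' : mdot w p = a * mdot p p + b * mdot p q := by
        nth_rewrite 1 [hweq]
        rw [mdot_add_left, mdot_smul_left, mdot_smul_left, hqp]
      have e1 : a * mdot p p + b * mdot p q = 0 := by rw [← e1', hwp]
      have e2 : mdot w q = a * mdot p q + b * mdot q q := by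
        nth_rewrite 1 [hweq]
        rw [mdot_add_left, mdot_smul_left, mdot_smul_left]
      have e3 : mdot w w = b * (a * mdot p q + b * mdot q q) := by
        nth_rewrite 1 [hweq]
        rw [mdot_add_left, mdot_smul_left, mdot_smul_left, hpw, mdot_comm q w, e2]
        ring
      have hb : b ≠ 0 := by
        intro h
        rw [h, zero_mul, add_zero] at e1
        rcases mul_eq_zero.mp e1 with h' | h'
        · rw [h, h', zero_smul, zero_smul, add_zero] at hweq
          exact hw hweq
        · exact hpp h'
      have hppww : mdot p p * mdot w w = b^2 * (mdot p p * mdot q q - mdot p q^2) := by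
        rw [e3]
        linear_combination (b * mdot p q) * e1
      have hD : mdot p p * mdot q q - mdot p q^2 < 0 := by
        have h1 : mdot p p * mdot w w < 0 := mul_neg_of_neg_of_pos hp hww
        rw [hppww] at h1
        nlinarith [sq_nonneg b]
      have hww2 : mdot w w = b^2 * (mdot p p * mdot q q - mdot p q^2) / mdot p p := by
        field_simp
        linear_combination hppww
      have hwqval : mdot w q = b * (mdot p p * mdot q q - mdot p q^2) / mdot p p := by
        rw [e2]
        field_simp
        linear_combination mdot p q * e1
      have hw'w'val : mdot w' w'
          = b^2 * (mdot p p * mdot q q - mdot p q^2) * mdot q q / mdot p q^2 := by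
        rw [hw'w', hwqval, hww2]
        field_simp
        ring
      have hne : mdot w' w' ≠ 0 := by
        rw [hw'w'val]
        apply div_ne_zero
        · exact mul_ne_zero (mul_ne_zero (pow_ne_zero 2 hb) (ne_of_lt hD)) hqq
        · exact pow_ne_zero 2 hpq
      refine ⟨hne, ?_⟩
      have hDne : mdot p p * mdot q q - mdot p q ^ 2 ≠ 0 := ne_of_lt hD
      rw [tance, hw'w'val, hww2]
      field_simp [hb, hpp, hqq, hpq, hDne]
  obtain ⟨hne, heq⟩ := key
  constructor
  · rw [heq, tance, hww']
    rw [sq, mul_div_mul_left _ _ (ne_of_gt hww)]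
  · rw [heq, Real.sqrt_div (le_of_lt hww)]
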